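/- Let k > 0 and define E(c) := 2 ∫₀^{c−3k} (c − 3k − z)(z + k)/√(z(z + 2k)) dz for c > 3k. Then for every c > 3k the function E is differentiable at c with derivative E'(c) = 2 ∫₀^{c−3k} (z + k)/√(z(z + 2k)) dz = 2 √((c − 3k)(c − k)) > 0; in particular c ↦ E(c) is strictly increasing on (3k, ∞). -/

import Mathlib

open MeasureTheory Set intervalIntegral

namespace MomentumAux

lemma f_meas (k : ℝ) : Measurable (fun z : ℝ => (z + k) / Real.sqrt (z * (z + 2 * k))) :=
  (measurable_id.add_const k).div
    (Real.continuous_sqrt.measurable.comp (measurable_id.mul (measurable_id.add_const _)))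

lemma g_meas (k : ℝ) : Measurable (fun z : ℝ => z * (z + k) / Real.sqrt (z * (z + 2 * k))) :=
  (measurable_id.mul (measurable_id.add_const k)).div
    (Real.continuous_sqrt.measurable.comp (measurable_id.mul (measurable_id.add_const _)))

lemma hf_int {k : ℝ} (hk : 0 < k) {x : ℝ} (hx : 0 ≤ x) :
    IntervalIntegrable (fun z : ℝ => (z + k) / Real.sqrt (z * (z + 2 * k))) volume 0 x := by
  have hb : IntervalIntegrable (fun z : ℝ => ((x + k) / Real.sqrt (2 * k)) * z ^ (-(1/2) : ℝ))
      volume 0 x := (intervalIntegral.intervalIntegrable_rpow' (by norm_num)).const_mul _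
  refine hb.mono_fun ((f_meas k).aestronglyMeasurable) ?_
  filter_upwards [ae_restrict_mem measurableSet_uIoc] with z hz
  rw [uIoc_of_le hx] at hz
  obtain ⟨hz0, hzx⟩ := hz
  have h2k : (0:ℝ) < 2 * k := by linarith
  have hz2k : (0:ℝ) < z + 2 * k := by linarith
  have hsz : 0 < Real.sqrt z := Real.sqrt_pos.2 hz0
  have hs2k : 0 < Real.sqrt (2 * k) := Real.sqrt_pos.2 h2k
  have hrw : z ^ (-(1/2) : ℝ) = (Real.sqrt z)⁻¹ := by
    rw [Real.rpow_neg hz0.le, Real.sqrt_eq_rpow]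
  have h1 : (z + k) / (Real.sqrt z * Real.sqrt (z + 2 * k))
      ≤ (x + k) / (Real.sqrt z * Real.sqrt (2 * k)) := by
    apply div_le_div₀ (by positivity) (by linarith) (by positivity)
    exact mul_le_mul_of_nonneg_left (Real.sqrt_le_sqrt (by linarith)) hsz.le
  have h2 : (x + k) / (Real.sqrt z * Real.sqrt (2 * k))
      = (x + k) / Real.sqrt (2 * k) * (Real.sqrt z)⁻¹ := by
    rw [div_mul_eq_div_div_swap, div_eq_mul_inv]
  rw [Real.norm_eq_abs, Real.norm_eq_abs, Real.sqrt_mul hz0.le, hrw,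
    abs_of_nonneg (by positivity), abs_of_nonneg (by positivity)]
  rw [← h2]
  exact h1

lemma hg_int {k : ℝ} (hk : 0 < k) {x : ℝ} (hx : 0 ≤ x) :
    IntervalIntegrable (fun z : ℝ => z * (z + k) / Real.sqrt (z * (z + 2 * k))) volume 0 x := by
  have hb := (hf_int hk hx).const_mul x
  refine hb.mono_fun ((g_meas k).aestronglyMeasurable) ?_
  filter_upwards [ae_restrict_mem measurableSet_uIoc] with z hz
  rw [uIoc_of_le hx] at hz
  obtain ⟨hz0, hzx⟩ := hz
  rw [Real.norm_eq_abs, Real.norm_eq_abs, mul_div_assoc, abs_mul, abs_mul]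
  apply mul_le_mul_of_nonneg_right _ (abs_nonneg _)
  rw [abs_of_nonneg hz0.le, abs_of_nonneg hx]
  exact hzx

lemma hF {k : ℝ} (hk : 0 < k) {x : ℝ} (hx : 0 ≤ x) :
    ∫ z in (0:ℝ)..x, (z + k) / Real.sqrt (z * (z + 2 * k)) = Real.sqrt (x * (x + 2 * k)) := by
  have hder : ∀ t ∈ Ioo (0:ℝ) x,
      HasDerivWithinAt (fun z : ℝ => Real.sqrt (z * (z + 2 * k)))
        ((t + k) / Real.sqrt (t * (t + 2 * k))) (Ioi t) t := by
    intro t ht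
    have ht0 : 0 < t := ht.1
    have hpos : 0 < t * (t + 2 * k) := mul_pos ht0 (by linarith)
    have h1 : HasDerivAt (fun z : ℝ => z * (z + 2 * k)) (1 * (t + 2 * k) + t * 1) t :=
      (hasDerivAt_id t).mul ((hasDerivAt_id t).add_const (2 * k))
    have h2 := h1.sqrt (ne_of_gt hpos)
    have h3 : (1 * (t + 2 * k) + t * 1) / (2 * Real.sqrt (t * (t + 2 * k)))
        = (t + k) / Real.sqrt (t * (t + 2 * k)) := by
      have hs : Real.sqrt (t * (t + 2 * k)) ≠ 0 := ne_of_gt (Real.sqrt_pos.2 hpos)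
      field_simp
      ring
    rw [h3] at h2
    exact h2.hasDerivWithinAt
  have h := intervalIntegral.integral_eq_sub_of_hasDeriv_right_of_le hx
    ((Real.continuous_sqrt.comp
      (continuous_id.mul (continuous_id.add continuous_const))).continuousOn)
    hder (hf_int hk hx)
  rw [h]
  simp

lemma g_cont {k : ℝ} (hk : 0 < k) :
    ∀ x ∈ Ioi (0:ℝ),
      ContinuousAt (fun z : ℝ => z * (z + k) / Real.sqrt (z * (z + 2 * k))) x := by
  intro x hx
  have hx0 : 0 < x := hx
  have hpos : 0 < x * (x + 2 * k) := mul_pos hx0 (by linarith)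
  exact ContinuousAt.div (by fun_prop)
    ((Real.continuous_sqrt.comp (continuous_id.mul (continuous_id.add continuous_const))).continuousAt)
    (ne_of_gt (Real.sqrt_pos.2 hpos))

lemma hG {k : ℝ} (hk : 0 < k) {a : ℝ} (ha : 0 < a) :
    HasDerivAt (fun x : ℝ => ∫ z in (0:ℝ)..x, z * (z + k) / Real.sqrt (z * (z + 2 * k)))
      (a * (a + k) / Real.sqrt (a * (a + 2 * k))) a :=
  intervalIntegral.integral_hasDerivAt_right (hg_int hk ha.le)
    (ContinuousAt.stronglyMeasurableAtFilter isOpen_Ioi (g_cont hk) a ha)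
    (g_cont hk a ha)

lemma split {k : ℝ} (hk : 0 < k) {c : ℝ} (hc : 3 * k < c) :
    2 * ∫ z in (0:ℝ)..(c - 3 * k),
        (c - 3 * k - z) * (z + k) / Real.sqrt (z * (z + 2 * k))
      = 2 * ((c - 3 * k) * Real.sqrt ((c - 3 * k) * (c - 3 * k + 2 * k))
          - ∫ z in (0:ℝ)..(c - 3 * k), z * (z + k) / Real.sqrt (z * (z + 2 * k))) := by
  have ha : (0:ℝ) ≤ c - 3 * k := by linarith
  have h1 : ∀ z : ℝ, (c - 3 * k - z) * (z + k) / Real.sqrt (z * (z + 2 * k))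
      = (c - 3 * k) * ((z + k) / Real.sqrt (z * (z + 2 * k)))
        - z * (z + k) / Real.sqrt (z * (z + 2 * k)) := by
    intro z
    rw [mul_div_assoc', ← sub_div]
    ring_nf
  rw [intervalIntegral.integral_congr (g := fun z : ℝ =>
        (c - 3 * k) * ((z + k) / Real.sqrt (z * (z + 2 * k)))
          - z * (z + k) / Real.sqrt (z * (z + 2 * k))) (fun z _ => h1 z),
      intervalIntegral.integral_sub ((hf_int hk ha).const_mul _) (hg_int hk ha),
      intervalIntegral.integral_const_mul, hF hk ha]

lemma main {k : ℝ} (hk : 0 < k) {c : ℝ} (hc : 3 * k < c) :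
    HasDerivAt (fun c : ℝ => 2 * ∫ z in (0:ℝ)..(c - 3 * k),
        (c - 3 * k - z) * (z + k) / Real.sqrt (z * (z + 2 * k)))
      (2 * Real.sqrt ((c - 3 * k) * (c - k))) c := by
  have ha : 0 < c - 3 * k := by linarith
  have hpos : 0 < (c - 3 * k) * (c - 3 * k + 2 * k) := mul_pos ha (by linarith)
  have hu : HasDerivAt (fun c' : ℝ => c' - 3 * k) 1 c := (hasDerivAt_id c).sub_const _
  have hq : HasDerivAt (fun c' : ℝ => (c' - 3 * k) * (c' - 3 * k + 2 * k))
      (1 * (c - 3 * k + 2 * k) + (c - 3 * k) * 1) c := hu.mul (hu.add_const _)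
  have hsqrt := hq.sqrt (ne_of_gt hpos)
  have hA : HasDerivAt (fun c' : ℝ => (c' - 3 * k) * Real.sqrt ((c' - 3 * k) * (c' - 3 * k + 2 * k)))
      (1 * Real.sqrt ((c - 3 * k) * (c - 3 * k + 2 * k)) + (c - 3 * k) *
        ((1 * (c - 3 * k + 2 * k) + (c - 3 * k) * 1) /
          (2 * Real.sqrt ((c - 3 * k) * (c - 3 * k + 2 * k))))) c := hu.mul hsqrt
  have hGc : HasDerivAt (fun c' : ℝ => ∫ z in (0:ℝ)..(c' - 3 * k),
        z * (z + k) / Real.sqrt (z * (z + 2 * k)))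
      ((c - 3 * k) * ((c - 3 * k) + k) / Real.sqrt ((c - 3 * k) * ((c - 3 * k) + 2 * k)) * 1) c :=
    by have := (hG hk ha).comp c hu; exact this
  have hh := (hA.sub hGc).const_mul (2:ℝ)
  have hev : (fun c : ℝ => 2 * ∫ z in (0:ℝ)..(c - 3 * k),
        (c - 3 * k - z) * (z + k) / Real.sqrt (z * (z + 2 * k)))
      =ᶠ[nhds c] (fun c' : ℝ => 2 * ((c' - 3 * k) *
          Real.sqrt ((c' - 3 * k) * (c' - 3 * k + 2 * k))
        - ∫ z in (0:ℝ)..(c' - 3 * k), z * (z + k) / Real.sqrt (z * (z + 2 * k)))) := by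
    filter_upwards [isOpen_Ioi.mem_nhds (show c ∈ Ioi (3 * k) from hc)] with c' hc'
    exact split hk hc'
  have hval : 2 * ((1 * Real.sqrt ((c - 3 * k) * (c - 3 * k + 2 * k)) + (c - 3 * k) *
        ((1 * (c - 3 * k + 2 * k) + (c - 3 * k) * 1) /
          (2 * Real.sqrt ((c - 3 * k) * (c - 3 * k + 2 * k)))))
      - (c - 3 * k) * ((c - 3 * k) + k) / Real.sqrt ((c - 3 * k) * ((c - 3 * k) + 2 * k)) * 1)
      = 2 * Real.sqrt ((c - 3 * k) * (c - k)) := by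
    rw [show (c - 3 * k) * (c - k) = (c - 3 * k) * (c - 3 * k + 2 * k) by ring]
    have hs : Real.sqrt ((c - 3 * k) * (c - 3 * k + 2 * k)) ≠ 0 :=
      ne_of_gt (Real.sqrt_pos.2 hpos)
    field_simp
    ring
  exact hval ▸ (hh.congr_of_eventuallyEq hev)

end MomentumAux

/-- Monotonicity of the solitary-wave momentum:
`E(c) = 2 ∫₀^{c-3k} (c-3k-z)(z+k)/√(z(z+2k)) dz` is differentiable at every `c > 3k`
with derivative `2 ∫₀^{c-3k} (z+k)/√(z(z+2k)) dz = 2 √((c-3k)(c-k)) > 0`,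
hence strictly increasing on `(3k, ∞)`. -/
theorem momentum_monotone (k : ℝ) (hk : 0 < k) :
    (∀ c : ℝ, 3 * k < c →
      HasDerivAt (fun c : ℝ =>
          2 * ∫ z in (0 : ℝ)..(c - 3 * k),
            (c - 3 * k - z) * (z + k) / Real.sqrt (z * (z + 2 * k)))
        (2 * ∫ z in (0 : ℝ)..(c - 3 * k), (z + k) / Real.sqrt (z * (z + 2 * k))) c ∧
      (2 * ∫ z in (0 : ℝ)..(c - 3 * k), (z + k) / Real.sqrt (z * (z + 2 * k))) =
        2 * Real.sqrt ((c - 3 * k) * (c - k)) ∧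
      0 < 2 * Real.sqrt ((c - 3 * k) * (c - k))) ∧
    StrictMonoOn (fun c : ℝ =>
        2 * ∫ z in (0 : ℝ)..(c - 3 * k),
          (c - 3 * k - z) * (z + k) / Real.sqrt (z * (z + 2 * k)))
      (Set.Ioi (3 * k)) := by
  have key : ∀ c : ℝ, 3 * k < c →
      (2 * ∫ z in (0 : ℝ)..(c - 3 * k), (z + k) / Real.sqrt (z * (z + 2 * k))) =
        2 * Real.sqrt ((c - 3 * k) * (c - k)) := by
    intro c hc
    have ha : (0:ℝ) ≤ c - 3 * k := by linarith
    rw [MomentumAux.hF hk ha,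
      show (c - 3 * k) * (c - k) = (c - 3 * k) * (c - 3 * k + 2 * k) by ring]
  constructor
  · intro c hc
    have ha : 0 < c - 3 * k := by linarith
    have hpos : 0 < (c - 3 * k) * (c - k) := mul_pos ha (by linarith)
    refine ⟨?_, key c hc, by positivity⟩
    rw [key c hc]
    exact MomentumAux.main hk hc
  · apply strictMonoOn_of_deriv_pos (convex_Ioi _)
    · intro x hx
      exact ((MomentumAux.main hk (Set.mem_Ioi.1 hx)).continuousAt).continuousWithinAt
    · intro x hx
      rw [interior_Ioi] at hx
      have hx' : 3 * k < x := hx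
      rw [(MomentumAux.main hk hx').deriv]
      have h1 : 0 < x - 3 * k := by linarith
      have hpos : 0 < (x - 3 * k) * (x - k) := mul_pos h1 (by linarith)
      positivity
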